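/- Let B₁, ..., B_q be linear maps from a finite-dimensional real inner product space X to ℝ^{m_1}, ..., ℝ^{m_q} respectively, and let B : X → ℝ^{m_1} × ⋯ × ℝ^{m_q} be the stacked operator B x = (B₁ x, ..., B_q x). Define for each i the operator M_i = B_i B_i* + ∑_{j ≠ i} (B_i B_j* B_j B_i*)^{1/2}. Then B B* ⪯ Diag(M₁, ..., M_q) in the Loewner order on self-adjoint operators on ℝ^{m_1} × ⋯ × ℝ^{m_q}. -/

import Mathlib

open Finset

private lemma key_pair
    {E F : Type*} [NormedAddCommGroup E] [InnerProductSpace ℝ E] [FiniteDimensional ℝ E]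
    [NormedAddCommGroup F] [InnerProductSpace ℝ F] [FiniteDimensional ℝ F]
    (T : F →ₗ[ℝ] E) (S : E →ₗ[ℝ] E) (S' : F →ₗ[ℝ] F)
    (hSsa : ∀ a b : E, (inner ℝ (S a) b : ℝ) = inner ℝ a (S b))
    (hSpsd : ∀ a : E, 0 ≤ (inner ℝ a (S a) : ℝ))
    (hS'sa : ∀ a b : F, (inner ℝ (S' a) b : ℝ) = inner ℝ a (S' b))
    (hS'psd : ∀ a : F, 0 ≤ (inner ℝ a (S' a) : ℝ))
    (hSsq : S ∘ₗ S = T ∘ₗ LinearMap.adjoint T)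
    (hS'sq : S' ∘ₗ S' = LinearMap.adjoint T ∘ₗ T)
    (a : E) (b : F) :
    2 * (inner ℝ a (T b) : ℝ) ≤ (inner ℝ a (S a) : ℝ) + (inner ℝ b (S' b) : ℝ) := by
  classical
  have hS'sym : S'.IsSymmetric := fun x y => hS'sa x y
  have hrank : Module.finrank ℝ F = Module.finrank ℝ F := rfl
  set V := hS'sym.eigenvectorBasis hrank with hV
  set μ := hS'sym.eigenvalues hrank with hμdef
  have hSV : ∀ l, S' (V l) = μ l • V l := by
    intro l
    exact hS'sym.apply_eigenvectorBasis hrank l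
  have hVorth : ∀ l m, (inner ℝ (V l) (V m) : ℝ) = if l = m then 1 else 0 :=
    fun l m => orthonormal_iff_ite.mp V.orthonormal l m
  have hμ0 : ∀ l, 0 ≤ μ l := by
    intro l
    have h := hS'psd (V l)
    rw [hSV l, real_inner_smul_right, hVorth l l] at h
    simpa using h
  have hT'T : ∀ x, LinearMap.adjoint T (T x) = S' (S' x) := by
    intro x
    have := DFunLike.congr_fun hS'sq x
    simpa [LinearMap.comp_apply] using this.symm
  have hTT' : ∀ x, S (S x) = T (LinearMap.adjoint T x) := by
    intro x
    have := DFunLike.congr_fun hSsq x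
    simpa [LinearMap.comp_apply] using this
  have hTV0 : ∀ l, μ l = 0 → T (V l) = 0 := by
    intro l h0
    have h1 : (inner ℝ (T (V l)) (T (V l)) : ℝ) = 0 := by
      rw [← LinearMap.adjoint_inner_left, hT'T, hSV l, map_smul, hSV l,
        real_inner_smul_left, real_inner_smul_left, h0]
      ring
    exact inner_self_eq_zero.mp h1
  set w : Fin (Module.finrank ℝ F) → E :=
    fun l => if μ l = 0 then 0 else (μ l)⁻¹ • T (V l) with hw
  have hTw : ∀ l, T (V l) = μ l • w l := by
    intro l
    by_cases h : μ l = 0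
    · simp [hw, h, hTV0 l h]
    · simp [hw, h, smul_smul, mul_inv_cancel₀ h]
  have hSw : ∀ l, S (w l) = μ l • w l := by
    intro l
    by_cases h : μ l = 0
    · simp [hw, h]
    · have hμpos : 0 < μ l := lt_of_le_of_ne (hμ0 l) (Ne.symm h)
      have hSSu : S (S (T (V l))) = (μ l * μ l) • T (V l) := by
        rw [hTT', hT'T, hSV l, map_smul, hSV l, smul_smul, map_smul]
      have hSu : S (T (V l)) = μ l • T (V l) := by
        set d := S (T (V l)) - μ l • T (V l) with hd
        have hsum : S d + μ l • d = 0 := by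
          rw [hd, map_sub, map_smul, hSSu, smul_sub, smul_smul]
          abel
        have hSd : S d = (-(μ l)) • d := by
          rw [neg_smul]
          exact eq_neg_of_add_eq_zero_left hsum
        have h3 : (0:ℝ) ≤ inner ℝ d (S d) := hSpsd d
        rw [hSd, real_inner_smul_right] at h3
        have h4 : (inner ℝ d d : ℝ) ≤ 0 := by nlinarith [real_inner_self_nonneg (x := d)]
        have h5 : d = 0 := real_inner_self_nonpos.mp h4
        have h6 : S (T (V l)) - μ l • T (V l) = 0 := by rw [← hd, h5]
        exact sub_eq_zero.mp h6
      simp only [hw, if_neg h, map_smul, hSu, smul_smul]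
      rw [mul_comm]
  have hww : ∀ l m, μ l ≠ 0 → μ m ≠ 0 →
      (inner ℝ (w l) (w m) : ℝ) = if l = m then 1 else 0 := by
    intro l m hl hm
    simp only [hw, if_neg hl, if_neg hm]
    rw [real_inner_smul_left, real_inner_smul_right]
    have hTT : (inner ℝ (T (V l)) (T (V m)) : ℝ) = μ l * (μ m * inner ℝ (V l) (V m)) := by
      rw [← LinearMap.adjoint_inner_left, hT'T, hS'sa, hSV l, hSV m,
        real_inner_smul_left, real_inner_smul_right]
    rw [hTT, hVorth l m]
    split_ifs with he
    · field_simp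
    · ring
  -- coordinates
  set β : Fin (Module.finrank ℝ F) → ℝ := fun l => inner ℝ (V l) b with hβ
  have hb : b = ∑ l, β l • V l := by
    simp only [hβ]
    conv_lhs => rw [← V.sum_repr b]
    refine Finset.sum_congr rfl fun l _ => ?_
    rw [V.repr_apply_apply]
  set α : Fin (Module.finrank ℝ F) → ℝ := fun l => inner ℝ a (w l) with hα
  have hTb : (inner ℝ a (T b) : ℝ) = ∑ l, β l * (μ l * α l) := by
    conv_lhs => rw [hb]
    rw [map_sum, inner_sum]
    refine Finset.sum_congr rfl fun l _ => ?_
    rw [map_smul, hTw l, real_inner_smul_right, real_inner_smul_right]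
  have hbS : (inner ℝ b (S' b) : ℝ) = ∑ l, μ l * β l ^ 2 := by
    have hS'b : S' b = ∑ l, β l • μ l • V l := by
      conv_lhs => rw [hb]
      rw [map_sum]
      exact Finset.sum_congr rfl fun l _ => by rw [map_smul, hSV l]
    rw [hS'b, inner_sum]
    refine Finset.sum_congr rfl fun l _ => ?_
    rw [real_inner_smul_right, real_inner_smul_right, real_inner_comm]
    simp only [hβ]
    ring
  set c : E := ∑ l, α l • w l with hc
  have hSc : S c = ∑ l, α l • μ l • w l := by
    rw [hc, map_sum]
    exact Finset.sum_congr rfl fun l _ => by rw [map_smul, hSw l]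
  have haSc : (inner ℝ a (S c) : ℝ) = ∑ l, μ l * α l ^ 2 := by
    rw [hSc, inner_sum]
    refine Finset.sum_congr rfl fun l _ => ?_
    rw [real_inner_smul_right, real_inner_smul_right]
    simp only [hα]
    ring
  have hcw : ∀ m, μ m * (inner ℝ c (w m) : ℝ) = μ m * α m := by
    intro m
    by_cases hm : μ m = 0
    · rw [hm]; ring
    · congr 1
      rw [hc, sum_inner]
      have : ∀ l ∈ Finset.univ, l ≠ m → (inner ℝ (α l • w l) (w m) : ℝ) = 0 := by
        intro l _ hlm
        rw [real_inner_smul_left]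
        by_cases hl : μ l = 0
        · simp [hw, hl]
        · rw [hww l m hl hm, if_neg hlm]; ring
      rw [Finset.sum_eq_single m (fun l hl hlm => this l hl hlm) (by simp)]
      rw [real_inner_smul_left, hww m m hm hm, if_pos rfl]
      simp [hα]
  have hcSc : (inner ℝ c (S c) : ℝ) = ∑ l, μ l * α l ^ 2 := by
    rw [hSc, inner_sum]
    refine Finset.sum_congr rfl fun l _ => ?_
    rw [real_inner_smul_right, real_inner_smul_right, hcw l]
    ring
  have hkey2 : ∑ l, μ l * α l ^ 2 ≤ (inner ℝ a (S a) : ℝ) := by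
    have h0 : (0:ℝ) ≤ inner ℝ (a - c) (S (a - c)) := hSpsd _
    have hexp : (inner ℝ (a - c) (S (a - c)) : ℝ)
        = inner ℝ a (S a) - 2 * inner ℝ a (S c) + inner ℝ c (S c) := by
      rw [map_sub, inner_sub_left, inner_sub_right, inner_sub_right]
      have h1 : (inner ℝ c (S a) : ℝ) = inner ℝ a (S c) := by
        rw [← hSsa c a, real_inner_comm]
      rw [h1]
      ring
    rw [hexp, haSc, hcSc] at h0
    linarith
  have hfinal : 2 * (inner ℝ a (T b) : ℝ)
      ≤ (∑ l, μ l * α l ^ 2) + ∑ l, μ l * β l ^ 2 := by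
    rw [hTb, Finset.mul_sum, ← Finset.sum_add_distrib]
    exact Finset.sum_le_sum fun l _ => by nlinarith [hμ0 l, sq_nonneg (α l - β l)]
  rw [hbS]
  linarith

/-- `B B* ⪯ Diag(M₁, ..., M_q)` where
`M_i = B_i B_i* + ∑_{j ≠ i} (B_i B_j* B_j B_i*)^{1/2}`. -/
theorem stacked_operator_diag_domination
    {ι : Type*} [Fintype ι] [DecidableEq ι]
    {X : Type*} [NormedAddCommGroup X] [InnerProductSpace ℝ X] [FiniteDimensional ℝ X]
    {E : ι → Type*} [∀ i, NormedAddCommGroup (E i)] [∀ i, InnerProductSpace ℝ (E i)]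
    [∀ i, FiniteDimensional ℝ (E i)]
    (B : ∀ i, X →ₗ[ℝ] E i)
    -- the stacked operator
    (Bfull : X →ₗ[ℝ] PiLp 2 E)
    (hBfull : ∀ (x : X) (i : ι), Bfull x i = B i x)
    -- S i j is the positive semidefinite square root of B_i B_j* B_j B_i*
    (S : ∀ i j, E i →ₗ[ℝ] E i)
    (hSsa : ∀ i j, ∀ a b : E i, (inner ℝ (S i j a) b : ℝ) = inner ℝ a (S i j b))
    (hSpsd : ∀ i j, ∀ a : E i, 0 ≤ (inner ℝ a (S i j a) : ℝ))
    (hSsq : ∀ i j, (S i j) ∘ₗ (S i j)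
      = ((B i) ∘ₗ (LinearMap.adjoint (B j))) ∘ₗ ((B j) ∘ₗ (LinearMap.adjoint (B i))))
    -- the diagonal blocks M i
    (M : ∀ i, E i →ₗ[ℝ] E i)
    (hM : ∀ i, M i = (B i) ∘ₗ (LinearMap.adjoint (B i))
      + ∑ j ∈ Finset.univ.erase i, S i j) :
    ∀ z : PiLp 2 E,
      (inner ℝ z (Bfull (LinearMap.adjoint Bfull z)) : ℝ)
        ≤ ∑ i, (inner ℝ (z i) (M i (z i)) : ℝ) := by
  classical
  intro z
  set u : X := ∑ i, LinearMap.adjoint (B i) (z i) with hu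
  have hadj : LinearMap.adjoint Bfull z = u := by
    apply ext_inner_right ℝ
    intro v
    rw [LinearMap.adjoint_inner_left, PiLp.inner_apply, hu, sum_inner]
    refine Finset.sum_congr rfl fun i _ => ?_
    rw [hBfull v i, LinearMap.adjoint_inner_left]
  have hLHS : (inner ℝ z (Bfull (LinearMap.adjoint Bfull z)) : ℝ)
      = ∑ i, ∑ j, (inner ℝ (z i) ((B i) (LinearMap.adjoint (B j) (z j))) : ℝ) := by
    rw [hadj, PiLp.inner_apply]
    refine Finset.sum_congr rfl fun i _ => ?_
    rw [hBfull u i, hu, map_sum, inner_sum]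
  have hRHS : ∀ i, (inner ℝ (z i) (M i (z i)) : ℝ)
      = inner ℝ (z i) (B i (LinearMap.adjoint (B i) (z i)))
        + ∑ j ∈ Finset.univ.erase i, (inner ℝ (z i) (S i j (z i)) : ℝ) := by
    intro i
    rw [hM i]
    simp only [LinearMap.add_apply, LinearMap.coe_sum, Finset.sum_apply,
      LinearMap.comp_apply, inner_add_right, inner_sum]
  have hsplit : ∀ i, ∑ j, (inner ℝ (z i) ((B i) (LinearMap.adjoint (B j) (z j))) : ℝ)
      = inner ℝ (z i) (B i (LinearMap.adjoint (B i) (z i)))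
        + ∑ j ∈ Finset.univ.erase i,
            (inner ℝ (z i) ((B i) (LinearMap.adjoint (B j) (z j))) : ℝ) := by
    intro i
    exact (Finset.add_sum_erase _ _ (Finset.mem_univ i)).symm
  have hkey : ∀ i j, i ≠ j →
      2 * (inner ℝ (z i) ((B i) (LinearMap.adjoint (B j) (z j))) : ℝ)
        ≤ (inner ℝ (z i) (S i j (z i)) : ℝ) + (inner ℝ (z j) (S j i (z j)) : ℝ) := by
    intro i j hij
    have hadjT : LinearMap.adjoint ((B i) ∘ₗ (LinearMap.adjoint (B j)))
        = (B j) ∘ₗ (LinearMap.adjoint (B i)) := by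
      rw [LinearMap.adjoint_comp, LinearMap.adjoint_adjoint]
    have h := key_pair ((B i) ∘ₗ (LinearMap.adjoint (B j))) (S i j) (S j i)
      (hSsa i j) (hSpsd i j) (hSsa j i) (hSpsd j i)
      (by rw [hadjT]; exact hSsq i j)
      (by rw [hadjT]; exact hSsq j i)
      (z i) (z j)
    simpa using h
  have hswap : ∑ i, ∑ j ∈ Finset.univ.erase i, (inner ℝ (z j) (S j i (z j)) : ℝ)
      = ∑ i, ∑ j ∈ Finset.univ.erase i, (inner ℝ (z i) (S i j (z i)) : ℝ) := by
    exact Finset.sum_comm' fun i j => by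
      simp only [Finset.mem_univ, Finset.mem_erase, true_and, and_true]
      exact ⟨fun h => Ne.symm h, fun h => Ne.symm h⟩
  have hoff : ∑ i, ∑ j ∈ Finset.univ.erase i,
        (inner ℝ (z i) ((B i) (LinearMap.adjoint (B j) (z j))) : ℝ)
      ≤ ∑ i, ∑ j ∈ Finset.univ.erase i, (inner ℝ (z i) (S i j (z i)) : ℝ) := by
    have h2 : ∑ i, ∑ j ∈ Finset.univ.erase i,
          2 * (inner ℝ (z i) ((B i) (LinearMap.adjoint (B j) (z j))) : ℝ)
        ≤ ∑ i, ∑ j ∈ Finset.univ.erase i,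
          ((inner ℝ (z i) (S i j (z i)) : ℝ) + (inner ℝ (z j) (S j i (z j)) : ℝ)) := by
      refine Finset.sum_le_sum fun i _ => Finset.sum_le_sum fun j hj => ?_
      exact hkey i j (fun h => (Finset.mem_erase.mp hj).1 h.symm)
    simp only [Finset.sum_add_distrib, ← Finset.mul_sum] at h2
    rw [hswap] at h2
    linarith
  rw [hLHS]
  calc ∑ i, ∑ j, (inner ℝ (z i) ((B i) (LinearMap.adjoint (B j) (z j))) : ℝ)
      = ∑ i, ((inner ℝ (z i) (B i (LinearMap.adjoint (B i) (z i))) : ℝ)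
          + ∑ j ∈ Finset.univ.erase i,
            (inner ℝ (z i) ((B i) (LinearMap.adjoint (B j) (z j))) : ℝ)) :=
        Finset.sum_congr rfl fun i _ => hsplit i
    _ ≤ ∑ i, ((inner ℝ (z i) (B i (LinearMap.adjoint (B i) (z i))) : ℝ)
          + ∑ j ∈ Finset.univ.erase i, (inner ℝ (z i) (S i j (z i)) : ℝ)) := by
        rw [Finset.sum_add_distrib, Finset.sum_add_distrib]
        exact add_le_add_right hoff _
    _ = ∑ i, (inner ℝ (z i) (M i (z i)) : ℝ) :=
        (Finset.sum_congr rfl fun i _ => (hRHS i).symm)
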